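/- Archimedean Putinar Positivstellensatz: let S = {x ∈ ℝ^n : h(x) = 0, g(x) ≥ 0} for polynomial tuples h, g, and suppose Ideal(h) + QM(g) contains N − ‖x‖² for some N > 0. If a polynomial p is strictly positive on S, then p ∈ Ideal(h) + QM(g). -/

import Mathlib

open MvPolynomial

/-- Membership in the quadratic module `QM(g) = Σ[x] + g_1·Σ[x] + ⋯ + g_ℓ·Σ[x]`. -/
def inQM {n ℓ : ℕ} (g : Fin ℓ → MvPolynomial (Fin n) ℝ) (p : MvPolynomial (Fin n) ℝ) : Prop :=
  ∃ σ₀ : MvPolynomial (Fin n) ℝ, IsSumSq σ₀ ∧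
    ∃ σ : Fin ℓ → MvPolynomial (Fin n) ℝ, (∀ j, IsSumSq (σ j)) ∧
      p = σ₀ + ∑ j, σ j * g j

/-- Membership in `Ideal(h) + QM(g)`. -/
def inCone {n t ℓ : ℕ} (h : Fin t → MvPolynomial (Fin n) ℝ)
    (g : Fin ℓ → MvPolynomial (Fin n) ℝ) (p : MvPolynomial (Fin n) ℝ) : Prop :=
  ∃ a ∈ Ideal.span (Set.range h), ∃ b : MvPolynomial (Fin n) ℝ, inQM g b ∧ p = a + b

namespace Putinar

variable {n : ℕ}

local notation "PR" => MvPolynomial (Fin n) ℝ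

/-- Quadratic module predicate. -/
structure IsQM (Q : Set (MvPolynomial (Fin n) ℝ)) : Prop where
  add_mem : ∀ {a b : MvPolynomial (Fin n) ℝ}, a ∈ Q → b ∈ Q → a + b ∈ Q
  sq_mul_mem : ∀ (s : MvPolynomial (Fin n) ℝ) {a}, a ∈ Q → s ^ 2 * a ∈ Q
  one_mem : (1 : MvPolynomial (Fin n) ℝ) ∈ Q

namespace IsQM

variable {Q : Set (MvPolynomial (Fin n) ℝ)}

theorem zero_mem (hQ : IsQM Q) : (0 : PR) ∈ Q := by
  simpa using hQ.sq_mul_mem 0 hQ.one_mem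

theorem sq_mem (hQ : IsQM Q) (s : PR) : s ^ 2 ∈ Q := by
  simpa using hQ.sq_mul_mem s hQ.one_mem

theorem mul_self_mem (hQ : IsQM Q) (s : PR) : s * s ∈ Q := by
  simpa [sq] using hQ.sq_mem s

theorem const_mem (hQ : IsQM Q) {c : ℝ} (hc : 0 ≤ c) : (C c : PR) ∈ Q := by
  have : (C c : PR) = (C (Real.sqrt c)) ^ 2 := by
    rw [← C_pow, Real.sq_sqrt hc]
  rw [this]; exact hQ.sq_mem _

theorem smul_mem (hQ : IsQM Q) {c : ℝ} (hc : 0 ≤ c) {a : PR} (ha : a ∈ Q) : C c * a ∈ Q := by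
  have : (C c : PR) = (C (Real.sqrt c)) ^ 2 := by
    rw [← C_pow, Real.sq_sqrt hc]
  rw [this]; exact hQ.sq_mul_mem _ ha

theorem sumsq_mem (hQ : IsQM Q) {σ : PR} (hσ : IsSumSq σ) : σ ∈ Q := by
  induction hσ with
  | zero => exact hQ.zero_mem
  | @sq_add a S _ ih => exact hQ.add_mem (hQ.mul_self_mem a) ih

theorem sumsq_mul_mem (hQ : IsQM Q) {σ : PR} (hσ : IsSumSq σ) {a : PR} (ha : a ∈ Q) : σ * a ∈ Q := by
  induction hσ with
  | zero => simpa using hQ.zero_mem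
  | @sq_add s S _ ih =>
      have : (s * s + S) * a = s ^ 2 * a + S * a := by ring
      rw [this]; exact hQ.add_mem (hQ.sq_mul_mem s ha) ih

theorem not_const_neg (hQ : IsQM Q) (hprop : (-1 : PR) ∉ Q) {t : ℝ} (ht : t < 0) : (C t : PR) ∉ Q := by
  intro hmem
  apply hprop
  have h1 : (0:ℝ) ≤ -t⁻¹ := by
    have := inv_nonpos.mpr ht.le; linarith
  have := hQ.smul_mem h1 hmem
  have heq : (C (-t⁻¹) : PR) * C t = -1 := by
    rw [← C_mul]
    have : -t⁻¹ * t = -1 := by rw [neg_mul, inv_mul_cancel₀ ht.ne]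
    rw [this, C_neg, C_1]
  rwa [heq] at this

theorem finsum_sq_mem (hQ : IsQM Q) (s : Finset (Fin n)) (f : Fin n → PR) :
    (∑ j ∈ s, (f j) ^ 2) ∈ Q :=
  Finset.sum_induction _ (· ∈ Q) (fun _ _ ha hb => hQ.add_mem ha hb) hQ.zero_mem
    (fun i _ => hQ.sq_mem (f i))

section Arch

variable {N₀ : ℝ}

theorem X_bound (hQ : IsQM Q) (harc0 : (C N₀ - ∑ i : Fin n, X i ^ 2) ∈ Q) (i : Fin n) :
    (C N₀ - X i ^ 2 : PR) ∈ Q := by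
  have heq : (C N₀ - X i ^ 2 : PR)
      = (C N₀ - ∑ j : Fin n, X j ^ 2) + ∑ j ∈ Finset.univ.erase i, (X j : PR) ^ 2 := by
    rw [← Finset.sum_erase_add Finset.univ _ (Finset.mem_univ i)]
    ring
  rw [heq]
  exact hQ.add_mem harc0 (hQ.finsum_sq_mem _ _)

theorem bound_sq (hQ : IsQM Q) (hN₀ : 0 ≤ N₀)
    (harc0 : (C N₀ - ∑ i : Fin n, X i ^ 2) ∈ Q) (f : PR) :
    ∃ c : ℝ, 0 ≤ c ∧ (C c - f ^ 2) ∈ Q := by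
  induction f using MvPolynomial.induction_on with
  | C a =>
      refine ⟨a ^ 2, sq_nonneg a, ?_⟩
      have : (C (a ^ 2) - (C a) ^ 2 : PR) = 0 := by rw [← C_pow]; ring
      rw [this]; exact hQ.zero_mem
  | add f g hf hg =>
      obtain ⟨c, hc, hcm⟩ := hf
      obtain ⟨d, hd, hdm⟩ := hg
      refine ⟨2 * c + 2 * d, by linarith, ?_⟩
      have heq : (C (2 * c + 2 * d) - (f + g) ^ 2 : PR)
          = (f - g) ^ 2 + C 2 * (C c - f ^ 2) + C 2 * (C d - g ^ 2) := by
        simp only [C_add, C_mul, map_ofNat]; ring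
      rw [heq]
      exact hQ.add_mem (hQ.add_mem (hQ.sq_mem _) (hQ.smul_mem (by norm_num) hcm))
        (hQ.smul_mem (by norm_num) hdm)
  | mul_X f i hf =>
      obtain ⟨c, hc, hcm⟩ := hf
      refine ⟨c * N₀, mul_nonneg hc hN₀, ?_⟩
      have heq : (C (c * N₀) - (f * X i) ^ 2 : PR)
          = X i ^ 2 * (C c - f ^ 2) + C c * (C N₀ - X i ^ 2) := by
        rw [C_mul]; ring
      rw [heq]
      exact hQ.add_mem (hQ.sq_mul_mem _ hcm) (hQ.smul_mem hc (hQ.X_bound harc0 i))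

/-- Every polynomial is bounded above and below modulo an archimedean quadratic module. -/
theorem smul_cancel (hQ : IsQM Q) {t : ℝ} (ht : 0 < t) {a : PR} (h : C t * a ∈ Q) :
    a ∈ Q := by
  have h2 := hQ.smul_mem (inv_nonneg.mpr ht.le) h
  rwa [← mul_assoc, ← C_mul, inv_mul_cancel₀ ht.ne', C_1, one_mul] at h2

theorem bound (hQ : IsQM Q) (hN₀ : 0 ≤ N₀)
    (harc0 : (C N₀ - ∑ i : Fin n, X i ^ 2) ∈ Q) (f : PR) :
    ∃ c : ℝ, 0 ≤ c ∧ (C c - f) ∈ Q ∧ (C c + f) ∈ Q := by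
  obtain ⟨c, hc, hcm⟩ := hQ.bound_sq hN₀ harc0 f
  refine ⟨(c + 1) / 2, by linarith, ?_, ?_⟩
  · apply hQ.smul_cancel (t := 2) (by norm_num)
    have heq : (C (2:ℝ) : PR) * (C ((c+1)/2) - f) = (C c - f ^ 2) + (f - 1) ^ 2 := by
      have h1 : (2:ℝ) * ((c+1)/2) = c + 1 := by ring
      rw [mul_sub, ← C_mul, h1, C_add, C_1]
      simp only [map_ofNat]; ring
    rw [heq]
    exact hQ.add_mem hcm (hQ.sq_mem _)
  · apply hQ.smul_cancel (t := 2) (by norm_num)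
    have heq : (C (2:ℝ) : PR) * (C ((c+1)/2) + f) = (C c - f ^ 2) + (f + 1) ^ 2 := by
      have h1 : (2:ℝ) * ((c+1)/2) = c + 1 := by ring
      rw [mul_add, ← C_mul, h1, C_add, C_1]
      simp only [map_ofNat]; ring
    rw [heq]
    exact hQ.add_mem hcm (hQ.sq_mem _)

theorem mem_of_const_add (hQ : IsQM Q) {r : ℝ} (hr : r ≤ 0) {b : PR}
    (h : C r + b ∈ Q) : b ∈ Q := by
  have h2 := hQ.add_mem h (hQ.const_mem (neg_nonneg.mpr hr))
  have heq : (C r + b) + C (-r) = b := by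
    rw [add_comm (C r) b, add_assoc, ← C_add]
    simp
  rwa [heq] at h2

theorem mono_const (hQ : IsQM Q) {r s : ℝ} (hrs : r ≤ s) {b : PR}
    (h : C r + b ∈ Q) : C s + b ∈ Q := by
  have h2 := hQ.add_mem (hQ.const_mem (c := s - r) (by linarith)) h
  have heq : C (s - r) + (C r + b) = C s + b := by
    rw [← add_assoc, ← C_add]
    have hs : s - r + r = s := by ring
    rw [hs]
  rwa [heq] at h2

/-- Key lemma: if `Q` is an archimedean quadratic module, `σ` is a sum of squares and
`σ·b ∈ 1 + Q`, then `b ∈ Q`. -/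
theorem key (hQ : IsQM Q) (hN₀ : 0 ≤ N₀)
    (harc0 : (C N₀ - ∑ i : Fin n, X i ^ 2) ∈ Q) {σ b : PR}
    (hσ : IsSumSq σ) (hb : σ * b - 1 ∈ Q) : b ∈ Q := by
  obtain ⟨k, hk0, hkm, -⟩ := hQ.bound hN₀ harc0 σ
  obtain ⟨c, hc0, hcm, -⟩ := hQ.bound hN₀ harc0 (σ ^ 2 * b)
  obtain ⟨r₀, hr00, -, hr0m⟩ := hQ.bound hN₀ harc0 b
  set lam := max 1 (max c k) with hlam
  have hlam1 : (1:ℝ) ≤ lam := le_max_left _ _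
  have hlam0 : (0:ℝ) < lam := by linarith
  have hclam : c ≤ lam := le_trans (le_max_left c k) (le_max_right _ _)
  have hklam : k ≤ lam := le_trans (le_max_right c k) (le_max_right _ _)
  -- one improvement step
  have step : ∀ r : ℝ, 0 ≤ r → (C r + b) ∈ Q → (C (r - 1/lam) + b) ∈ Q := by
    intro r hr hmem
    have m1 : (C lam - σ) ^ 2 * (C r + b) ∈ Q := hQ.sq_mul_mem _ hmem
    have m2 : C (2*lam) * (σ * b - 1) ∈ Q := hQ.smul_mem (by linarith) hb
    have m4 : C r * (σ * (C (2*lam) - σ)) ∈ Q := by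
      apply hQ.smul_mem hr
      apply hQ.sumsq_mul_mem hσ
      have heq : (C (2*lam) - σ : PR) = C (2*lam - k) + (C k - σ) := by
        rw [map_sub]
        ring
      rw [heq]
      exact hQ.add_mem (hQ.const_mem (by linarith)) hkm
    have hE : ((C lam - σ) ^ 2 * (C r + b) + C (2*lam) * (σ * b - 1)
        + (C c - σ ^ 2 * b) + C r * (σ * (C (2*lam) - σ))) ∈ Q :=
      hQ.add_mem (hQ.add_mem (hQ.add_mem m1 m2) hcm) m4
    set r' := r - 2/lam + c/lam^2 with hr'
    have hscalar : lam ^ 2 * r' = lam ^ 2 * r - 2*lam + c := by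
      rw [hr']
      field_simp
    have heqE : ((C lam - σ) ^ 2 * (C r + b) + C (2*lam) * (σ * b - 1)
        + (C c - σ ^ 2 * b) + C r * (σ * (C (2*lam) - σ)))
        = C (lam ^ 2) * (C r' + b) := by
      rw [mul_add (C (lam ^ 2)), ← C_mul, hscalar]
      simp only [C_add, map_sub, C_mul, C_pow, map_ofNat]
      ring
    rw [heqE] at hE
    have hmem' : (C r' + b) ∈ Q := hQ.smul_cancel (by positivity) hE
    have hle : r' ≤ r - 1/lam := by
      have h1 : c / lam ^ 2 ≤ 1 / lam := by
        rw [div_le_div_iff₀ (by positivity) hlam0]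
        nlinarith
      rw [hr']
      have h2 : (2:ℝ)/lam = 1/lam + 1/lam := by ring
      linarith
    exact hQ.mono_const hle hmem'
  -- iterate
  have iter : ∀ m : ℕ, (C (r₀ - m * (1/lam)) + b) ∈ Q ∨ b ∈ Q := by
    intro m
    induction m with
    | zero => left; simpa using hr0m
    | succ m ih =>
        rcases ih with hm | hb'
        · by_cases hge : 0 ≤ r₀ - m * (1/lam)
          · left
            have h2 := step _ hge hm
            have hs : r₀ - m*(1/lam) - 1/lam = r₀ - ((m:ℕ)+1 : ℕ) * (1/lam) := by
              push_cast
              ring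
            rwa [hs] at h2
          · right
            exact hQ.mem_of_const_add (by linarith) hm
        · right; exact hb'
  obtain ⟨m, hm⟩ := exists_nat_gt (r₀ * lam)
  rcases iter m with hmem | hmem
  · apply hQ.mem_of_const_add (r := r₀ - m * (1/lam)) ?_ hmem
    rw [sub_nonpos, mul_one_div, le_div_iff₀ hlam0]
    linarith
  · exact hmem

end Arch

end IsQM

theorem isSumSq_one : IsSumSq (1 : MvPolynomial (Fin n) ℝ) := by
  rw [show (1 : MvPolynomial (Fin n) ℝ) = 1 * 1 + 0 by ring]
  exact IsSumSq.sq_add 1 IsSumSq.zero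

theorem sumSq_sq_mul {s σ : MvPolynomial (Fin n) ℝ} (hσ : IsSumSq σ) :
    IsSumSq (s ^ 2 * σ) := by
  induction hσ with
  | zero => simpa using IsSumSq.zero
  | @sq_add a S pS ih =>
      have heq : s ^ 2 * (a * a + S) = (s * a) * (s * a) + s ^ 2 * S := by ring
      rw [heq]
      exact IsSumSq.sq_add _ ih

/-- `Q + f·Σ`. -/
def addMul (Q : Set (MvPolynomial (Fin n) ℝ)) (f : MvPolynomial (Fin n) ℝ) :
    Set (MvPolynomial (Fin n) ℝ) :=
  {x | ∃ q ∈ Q, ∃ σ, IsSumSq σ ∧ x = q + σ * f}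

theorem IsQM.addMul {Q : Set (MvPolynomial (Fin n) ℝ)} (hQ : IsQM Q)
    (f : MvPolynomial (Fin n) ℝ) : IsQM (Putinar.addMul Q f) where
  add_mem := by
    rintro a b ⟨q1, hq1, σ1, hσ1, rfl⟩ ⟨q2, hq2, σ2, hσ2, rfl⟩
    exact ⟨q1 + q2, hQ.add_mem hq1 hq2, σ1 + σ2, hσ1.add hσ2, by ring⟩
  sq_mul_mem := by
    rintro s a ⟨q, hq, σ, hσ, rfl⟩
    exact ⟨s ^ 2 * q, hQ.sq_mul_mem s hq, s ^ 2 * σ, sumSq_sq_mul hσ, by ring⟩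
  one_mem := ⟨1, hQ.one_mem, 0, IsSumSq.zero, by ring⟩

theorem subset_addMul {Q : Set (MvPolynomial (Fin n) ℝ)} (f : MvPolynomial (Fin n) ℝ) :
    Q ⊆ addMul Q f :=
  fun q hq => ⟨q, hq, 0, IsSumSq.zero, by ring⟩

theorem mem_addMul_self {Q : Set (MvPolynomial (Fin n) ℝ)} (hQ : IsQM Q)
    (f : MvPolynomial (Fin n) ℝ) : f ∈ addMul Q f :=
  ⟨0, hQ.zero_mem, 1, isSumSq_one, by ring⟩

section Alp

variable {Q : Set (MvPolynomial (Fin n) ℝ)}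

/-- The linear functional attached to a total, proper, archimedean quadratic module. -/
noncomputable def alp (Q : Set (MvPolynomial (Fin n) ℝ)) (f : MvPolynomial (Fin n) ℝ) : ℝ :=
  sInf {r : ℝ | C r - f ∈ Q}

theorem shift_sub (hQ : IsQM Q) {r s : ℝ} (hrs : r ≤ s) {f : PR}
    (h : C r - f ∈ Q) : C s - f ∈ Q := by
  have h2 := hQ.add_mem (hQ.const_mem (c := s - r) (by linarith)) h
  have heq : C (s - r) + (C r - f) = C s - f := by
    rw [← add_sub_assoc, ← C_add]
    have hsr : s - r + r = s := by ring
    rw [hsr]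
  rwa [heq] at h2

theorem alp_set_nonempty (harc : ∀ f : PR, ∃ c : ℝ, 0 ≤ c ∧ (C c - f) ∈ Q ∧ (C c + f) ∈ Q) (f : PR) : {r : ℝ | C r - f ∈ Q}.Nonempty := by
  obtain ⟨c, -, hc, -⟩ := harc f
  exact ⟨c, hc⟩

theorem alp_bddBelow (harc : ∀ f : PR, ∃ c : ℝ, 0 ≤ c ∧ (C c - f) ∈ Q ∧ (C c + f) ∈ Q) (hQ : IsQM Q) (hprop : (-1 : PR) ∉ Q) (f : PR) :
    BddBelow {r : ℝ | C r - f ∈ Q} := by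
  obtain ⟨c, -, -, hc⟩ := harc f
  refine ⟨-c, fun r hr => ?_⟩
  by_contra hlt
  push_neg at hlt
  have hmem := hQ.add_mem hr hc
  have heq : (C r - f) + (C c + f) = C (r + c) := by rw [C_add]; ring
  rw [heq] at hmem
  exact hQ.not_const_neg hprop (by linarith) hmem

theorem alp_le (harc : ∀ f : PR, ∃ c : ℝ, 0 ≤ c ∧ (C c - f) ∈ Q ∧ (C c + f) ∈ Q) (hQ : IsQM Q) (hprop : (-1 : PR) ∉ Q) {f : PR} {r : ℝ}
    (hr : C r - f ∈ Q) : alp Q f ≤ r :=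
  csInf_le (alp_bddBelow harc hQ hprop f) hr

theorem alp_upper (harc : ∀ f : PR, ∃ c : ℝ, 0 ≤ c ∧ (C c - f) ∈ Q ∧ (C c + f) ∈ Q) (hQ : IsQM Q) (hprop : (-1 : PR) ∉ Q) (f : PR) {ε : ℝ} (hε : 0 < ε) :
    C (alp Q f + ε) - f ∈ Q := by
  obtain ⟨r, hr, hrlt⟩ := exists_lt_of_csInf_lt (alp_set_nonempty harc f)
    (show sInf {r : ℝ | C r - f ∈ Q} < alp Q f + ε by
      change alp Q f < alp Q f + ε; linarith)
  exact shift_sub hQ hrlt.le hr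

theorem alp_lower (harc : ∀ f : PR, ∃ c : ℝ, 0 ≤ c ∧ (C c - f) ∈ Q ∧ (C c + f) ∈ Q) (htot : ∀ f : PR, f ∈ Q ∨ -f ∈ Q) (hQ : IsQM Q) (hprop : (-1 : PR) ∉ Q) (f : PR) {ε : ℝ} (hε : 0 < ε) :
    f - C (alp Q f - ε) ∈ Q := by
  rcases htot (C (alp Q f - ε) - f) with hmem | hmem
  · exfalso
    have := alp_le harc hQ hprop hmem
    linarith
  · rwa [neg_sub] at hmem

theorem le_alp (harc : ∀ f : PR, ∃ c : ℝ, 0 ≤ c ∧ (C c - f) ∈ Q ∧ (C c + f) ∈ Q) (hQ : IsQM Q) (hprop : (-1 : PR) ∉ Q) {f : PR} {s : ℝ}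
    (hs : f - C s ∈ Q) : s ≤ alp Q f := by
  by_contra hlt
  push_neg at hlt
  set ε := (s - alp Q f) / 2 with hε
  have hε0 : 0 < ε := by rw [hε]; linarith
  have h1 := alp_upper harc hQ hprop f hε0
  have hmem := hQ.add_mem h1 hs
  have heq : (C (alp Q f + ε) - f) + (f - C s) = C (alp Q f + ε - s) := by
    rw [map_sub, C_add]; ring
  rw [heq] at hmem
  exact hQ.not_const_neg hprop (by rw [hε]; linarith) hmem

theorem alp_unique (harc : ∀ f : PR, ∃ c : ℝ, 0 ≤ c ∧ (C c - f) ∈ Q ∧ (C c + f) ∈ Q) (hQ : IsQM Q) (hprop : (-1 : PR) ∉ Q) {f : PR} {x : ℝ}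
    (h1 : ∀ ε : ℝ, 0 < ε → C (x + ε) - f ∈ Q)
    (h2 : ∀ ε : ℝ, 0 < ε → f - C (x - ε) ∈ Q) : alp Q f = x := by
  refine le_antisymm ?_ ?_
  · refine le_of_forall_pos_le_add fun ε hε => ?_
    exact alp_le harc hQ hprop (h1 ε hε)
  · refine le_of_forall_pos_le_add fun ε hε => ?_
    have := le_alp harc hQ hprop (h2 ε hε)
    linarith

theorem alp_C (harc : ∀ f : PR, ∃ c : ℝ, 0 ≤ c ∧ (C c - f) ∈ Q ∧ (C c + f) ∈ Q) (hQ : IsQM Q) (hprop : (-1 : PR) ∉ Q) (r : ℝ) : alp Q (C r) = r := by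
  refine alp_unique harc hQ hprop (fun ε hε => ?_) (fun ε hε => ?_)
  · have heq : (C (r + ε) - C r : PR) = C ε := by rw [C_add]; ring
    rw [heq]; exact hQ.const_mem hε.le
  · have heq : (C r - C (r - ε) : PR) = C ε := by rw [map_sub]; ring
    rw [heq]; exact hQ.const_mem hε.le

theorem alp_add (harc : ∀ f : PR, ∃ c : ℝ, 0 ≤ c ∧ (C c - f) ∈ Q ∧ (C c + f) ∈ Q) (htot : ∀ f : PR, f ∈ Q ∨ -f ∈ Q) (hQ : IsQM Q) (hprop : (-1 : PR) ∉ Q) (f g : PR) :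
    alp Q (f + g) = alp Q f + alp Q g := by
  refine alp_unique harc hQ hprop (fun ε hε => ?_) (fun ε hε => ?_)
  · have heq : C (alp Q f + alp Q g + ε) - (f + g)
        = (C (alp Q f + ε/2) - f) + (C (alp Q g + ε/2) - g) := by
      have hs : alp Q f + alp Q g + ε = (alp Q f + ε/2) + (alp Q g + ε/2) := by ring
      rw [hs, C_add]; ring
    rw [heq]
    exact hQ.add_mem (alp_upper harc hQ hprop f (by linarith))
      (alp_upper harc hQ hprop g (by linarith))
  · have heq : (f + g) - C (alp Q f + alp Q g - ε)
        = (f - C (alp Q f - ε/2)) + (g - C (alp Q g - ε/2)) := by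
      have hs : alp Q f + alp Q g - ε = (alp Q f - ε/2) + (alp Q g - ε/2) := by ring
      rw [hs, C_add]; ring
    rw [heq]
    exact hQ.add_mem (alp_lower harc htot hQ hprop f (by linarith))
      (alp_lower harc htot hQ hprop g (by linarith))

theorem alp_neg (harc : ∀ f : PR, ∃ c : ℝ, 0 ≤ c ∧ (C c - f) ∈ Q ∧ (C c + f) ∈ Q) (htot : ∀ f : PR, f ∈ Q ∨ -f ∈ Q) (hQ : IsQM Q) (hprop : (-1 : PR) ∉ Q) (f : PR) :
    alp Q (-f) = -(alp Q f) := by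
  refine alp_unique harc hQ hprop (fun ε hε => ?_) (fun ε hε => ?_)
  · have heq : C (-alp Q f + ε) - (-f) = f - C (alp Q f - ε) := by
      have hs : -alp Q f + ε = -(alp Q f - ε) := by ring
      rw [hs, C_neg]; ring
    rw [heq]
    exact alp_lower harc htot hQ hprop f hε
  · have heq : -f - C (-alp Q f - ε) = C (alp Q f + ε) - f := by
      have hs : -alp Q f - ε = -(alp Q f + ε) := by ring
      rw [hs, C_neg]; ring
    rw [heq]
    exact alp_upper harc hQ hprop f hε

theorem alp_nonneg (harc : ∀ f : PR, ∃ c : ℝ, 0 ≤ c ∧ (C c - f) ∈ Q ∧ (C c + f) ∈ Q) (hQ : IsQM Q) (hprop : (-1 : PR) ∉ Q) {f : PR} (hf : f ∈ Q) :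
    0 ≤ alp Q f := by
  have : f - C 0 ∈ Q := by rwa [C_0, sub_zero]
  exact le_alp harc hQ hprop this

theorem alp_smul (harc : ∀ f : PR, ∃ c : ℝ, 0 ≤ c ∧ (C c - f) ∈ Q ∧ (C c + f) ∈ Q) (htot : ∀ f : PR, f ∈ Q ∨ -f ∈ Q) (hQ : IsQM Q) (hprop : (-1 : PR) ∉ Q) (c : ℝ) (f : PR) :
    alp Q (C c * f) = c * alp Q f := by
  rcases lt_trichotomy c 0 with hc | hc | hc
  · have hpos : 0 < -c := by linarith
    have h1 : alp Q (C (-c) * f) = -c * alp Q f := by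
      refine alp_unique harc hQ hprop (fun ε hε => ?_) (fun ε hε => ?_)
      · have heq : C (-c * alp Q f + ε) - C (-c) * f
            = C (-c) * (C (alp Q f + ε / -c) - f) := by
          rw [mul_sub, ← C_mul]
          have hs : -c * (alp Q f + ε / -c) = -c * alp Q f + ε := by
            field_simp [hc.ne]
            ring
          rw [hs]
        rw [heq]
        exact hQ.smul_mem hpos.le (alp_upper harc hQ hprop f (by positivity))
      · have heq : C (-c) * f - C (-c * alp Q f - ε)
            = C (-c) * (f - C (alp Q f - ε / -c)) := by
          rw [mul_sub, ← C_mul]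
          have hs : -c * (alp Q f - ε / -c) = -c * alp Q f - ε := by
            field_simp [hc.ne]
            ring
          rw [hs]
        rw [heq]
        exact hQ.smul_mem hpos.le (alp_lower harc htot hQ hprop f (by positivity))
    have heq : C c * f = -(C (-c) * f) := by rw [C_neg]; ring
    rw [heq, alp_neg harc htot hQ hprop, h1]
    ring
  · subst hc; rw [C_0, zero_mul, zero_mul, ← C_0, alp_C harc hQ hprop]
  · refine alp_unique harc hQ hprop (fun ε hε => ?_) (fun ε hε => ?_)
    · have heq : C (c * alp Q f + ε) - C c * f
          = C c * (C (alp Q f + ε / c) - f) := by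
        rw [mul_sub, ← C_mul]
        have hs : c * (alp Q f + ε / c) = c * alp Q f + ε := by
          field_simp
        rw [hs]
      rw [heq]
      exact hQ.smul_mem hc.le (alp_upper harc hQ hprop f (by positivity))
    · have heq : C c * f - C (c * alp Q f - ε)
          = C c * (f - C (alp Q f - ε / c)) := by
        rw [mul_sub, ← C_mul]
        have hs : c * (alp Q f - ε / c) = c * alp Q f - ε := by
          field_simp
        rw [hs]
      rw [heq]
      exact hQ.smul_mem hc.le (alp_lower harc htot hQ hprop f (by positivity))

theorem alp_sq (harc : ∀ f : PR, ∃ c : ℝ, 0 ≤ c ∧ (C c - f) ∈ Q ∧ (C c + f) ∈ Q) (htot : ∀ f : PR, f ∈ Q ∨ -f ∈ Q) (hQ : IsQM Q) (hprop : (-1 : PR) ∉ Q) (f : PR) :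
    alp Q (f ^ 2) = (alp Q f) ^ 2 := by
  set a := alp Q f with ha
  set g := f - C a with hgdef
  have hg0 : alp Q g = 0 := by
    rw [hgdef, sub_eq_add_neg, ← C_neg, alp_add harc htot hQ hprop,
      alp_C harc hQ hprop, ← ha]
    ring
  -- upper and lower ε-bounds for g
  have hup : ∀ ε : ℝ, 0 < ε → C ε - g ∈ Q := by
    intro ε hε
    have := alp_upper harc hQ hprop g hε
    rwa [hg0, zero_add] at this
  have hdown : ∀ ε : ℝ, 0 < ε → C ε + g ∈ Q := by
    intro ε hε
    have := alp_lower harc htot hQ hprop g hε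
    rwa [hg0, zero_sub, C_neg, sub_neg_eq_add, add_comm] at this
  -- alp (g^2) = 0
  have hsqle : ∀ ε : ℝ, 0 < ε → C (ε ^ 2) - g ^ 2 ∈ Q := by
    intro ε hε
    apply hQ.smul_cancel (t := 2 * ε) (by linarith)
    have heq : C (2 * ε) * (C (ε ^ 2) - g ^ 2)
        = (C ε + g) ^ 2 * (C ε - g) + (C ε - g) ^ 2 * (C ε + g) := by
      simp only [C_mul, C_pow, map_ofNat]
      ring
    rw [heq]
    exact hQ.add_mem (hQ.sq_mul_mem _ (hup ε hε)) (hQ.sq_mul_mem _ (hdown ε hε))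
  have hgsq : alp Q (g ^ 2) = 0 := by
    refine le_antisymm ?_ (alp_nonneg harc hQ hprop (hQ.sq_mem g))
    by_contra hpos
    push_neg at hpos
    set ε := Real.sqrt (alp Q (g ^ 2) / 2) with hεdef
    have hε0 : 0 < ε := Real.sqrt_pos.mpr (by linarith)
    have h1 := alp_le harc hQ hprop (hsqle ε hε0)
    rw [hεdef, Real.sq_sqrt (by linarith)] at h1
    linarith
  -- expand f² = g² + 2a·g + a²
  have hexp : f ^ 2 = g ^ 2 + C (2 * a) * g + C (a * a) := by
    rw [hgdef]
    simp only [C_mul, map_ofNat]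
    ring
  rw [hexp, alp_add harc htot hQ hprop, alp_add harc htot hQ hprop,
    alp_smul harc htot hQ hprop, alp_C harc hQ hprop, hgsq, hg0]
  ring

theorem alp_mul (harc : ∀ f : PR, ∃ c : ℝ, 0 ≤ c ∧ (C c - f) ∈ Q ∧ (C c + f) ∈ Q) (htot : ∀ f : PR, f ∈ Q ∨ -f ∈ Q) (hQ : IsQM Q) (hprop : (-1 : PR) ∉ Q) (f g : PR) :
    alp Q (f * g) = alp Q f * alp Q g := by
  have hid : (f + g) ^ 2 + (-((f - g) ^ 2)) = C 4 * (f * g) := by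
    simp only [map_ofNat]
    ring
  have h1 : alp Q (C 4 * (f * g)) = 4 * alp Q (f * g) :=
    alp_smul harc htot hQ hprop 4 (f * g)
  have h2 : alp Q ((f + g) ^ 2 + (-((f - g) ^ 2)))
      = (alp Q f + alp Q g) ^ 2 - (alp Q f - alp Q g) ^ 2 := by
    rw [alp_add harc htot hQ hprop, alp_neg harc htot hQ hprop,
      alp_sq harc htot hQ hprop, alp_sq harc htot hQ hprop,
      alp_add harc htot hQ hprop]
    have h3 : alp Q (f - g) = alp Q f - alp Q g := by
      rw [sub_eq_add_neg, alp_add harc htot hQ hprop, alp_neg harc htot hQ hprop]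
      ring
    rw [h3]
    ring
  rw [hid, h1] at h2
  nlinarith [h2]

theorem alp_eval (harc : ∀ f : PR, ∃ c : ℝ, 0 ≤ c ∧ (C c - f) ∈ Q ∧ (C c + f) ∈ Q) (htot : ∀ f : PR, f ∈ Q ∨ -f ∈ Q) (hQ : IsQM Q) (hprop : (-1 : PR) ∉ Q) (f : PR) :
    alp Q f = eval (fun i => alp Q (X i)) f := by
  induction f using MvPolynomial.induction_on with
  | C r => rw [alp_C harc hQ hprop, eval_C]
  | add f g hf hg => rw [alp_add harc htot hQ hprop, eval_add, hf, hg]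
  | mul_X f i hf => rw [alp_mul harc htot hQ hprop, eval_mul, eval_X, hf]

end Alp

/-- Master theorem: if `M` is an archimedean quadratic module and `p ∉ M`, then there is a
point at which every element of `M` is nonnegative but `p` is nonpositive. -/
theorem exists_point {M : Set (MvPolynomial (Fin n) ℝ)} (hM : IsQM M) {N₀ : ℝ} (hN₀ : 0 ≤ N₀)
    (harc0 : (C N₀ - ∑ i : Fin n, X i ^ 2) ∈ M) {p : MvPolynomial (Fin n) ℝ} (hpM : p ∉ M) :
    ∃ x : Fin n → ℝ, (∀ f ∈ M, 0 ≤ eval x f) ∧ eval x p ≤ 0 := by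
  set M1 := addMul M (-p) with hM1def
  have hM1QM : IsQM M1 := hM.addMul (-p)
  have hM1arc : (C N₀ - ∑ i : Fin n, X i ^ 2) ∈ M1 := subset_addMul _ harc0
  have hM1prop : (-1 : PR) ∉ M1 := by
    rintro ⟨q, hq, σ, hσ, heq⟩
    apply hpM
    apply hM.key hN₀ harc0 hσ
    have hq' : σ * p - 1 = q := by linear_combination heq
    rw [hq']; exact hq
  set S := {Q : Set (MvPolynomial (Fin n) ℝ) | IsQM Q ∧ M1 ⊆ Q ∧ (-1 : PR) ∉ Q} with hSdef
  obtain ⟨Q, hM1Q, hQmax⟩ := zorn_subset_nonempty S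
    (fun c hcS hchain hcne => by
      refine ⟨⋃₀ c, ⟨?_, ?_, ?_⟩, fun s hs => Set.subset_sUnion_of_mem hs⟩
      · constructor
        · rintro a b ⟨s, hs, ha⟩ ⟨u, hu, hb⟩
          rcases hchain.total hs hu with hsu | hus
          · exact ⟨u, hu, ((hcS hu).1).add_mem (hsu ha) hb⟩
          · exact ⟨s, hs, ((hcS hs).1).add_mem ha (hus hb)⟩
        · rintro s a ⟨u, hu, ha⟩
          exact ⟨u, hu, ((hcS hu).1).sq_mul_mem s ha⟩
        · obtain ⟨s, hs⟩ := hcne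
          exact ⟨s, hs, (hcS hs).1.one_mem⟩
      · obtain ⟨s, hs⟩ := hcne
        exact (hcS hs).2.1.trans (Set.subset_sUnion_of_mem hs)
      · rintro ⟨s, hs, hmem⟩
        exact (hcS hs).2.2 hmem)
    M1 ⟨hM1QM, Set.Subset.rfl, hM1prop⟩
  have hQQM : IsQM Q := hQmax.1.1
  have hM1sub : M1 ⊆ Q := hQmax.1.2.1
  have hQprop : (-1 : PR) ∉ Q := hQmax.1.2.2
  have hQarc0 : (C N₀ - ∑ i : Fin n, X i ^ 2) ∈ Q := hM1sub hM1arc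
  have harc : ∀ f : PR, ∃ c : ℝ, 0 ≤ c ∧ (C c - f) ∈ Q ∧ (C c + f) ∈ Q :=
    hQQM.bound hN₀ hQarc0
  have htot : ∀ f : PR, f ∈ Q ∨ -f ∈ Q := by
    intro f
    by_cases hf : f ∈ Q
    · exact Or.inl hf
    · right
      have hQ' : (-1 : PR) ∈ addMul Q f := by
        by_contra hne
        have hmem : addMul Q f ∈ S := ⟨hQQM.addMul f, hM1sub.trans (subset_addMul f), hne⟩
        have hle := hQmax.2 hmem (subset_addMul f)
        exact hf (hle (mem_addMul_self hQQM f))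
      obtain ⟨q, hq, σ, hσ, heq⟩ := hQ'
      apply hQQM.key hN₀ hQarc0 hσ
      have hq' : σ * (-f) - 1 = q := by linear_combination heq
      rw [hq']; exact hq
  refine ⟨fun i => alp Q (X i), ?_, ?_⟩
  · intro f hf
    have h1 : 0 ≤ alp Q f := alp_nonneg harc hQQM hQprop (hM1sub (subset_addMul _ hf))
    rwa [alp_eval harc htot hQQM hQprop f] at h1
  · have hnegp : -p ∈ Q := hM1sub (mem_addMul_self hM (-p))
    have h1 : 0 ≤ alp Q (-p) := alp_nonneg harc hQQM hQprop hnegp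
    rw [alp_neg harc htot hQQM hQprop] at h1
    have h2 := alp_eval harc htot hQQM hQprop p
    linarith [h2 ▸ h1]

end Putinar

open Putinar

/-- Putinar's Positivstellensatz: if `Ideal(h) + QM(g)` contains
`N − ‖x‖²` for some `N > 0` and `p > 0` on `S = {h = 0, g ≥ 0}`, then
`p ∈ Ideal(h) + QM(g)`. -/
theorem stmt14 {n t ℓ : ℕ} (h : Fin t → MvPolynomial (Fin n) ℝ)
    (g : Fin ℓ → MvPolynomial (Fin n) ℝ)
    (harch : ∃ N : ℝ, 0 < N ∧ inCone h g (C N - ∑ i : Fin n, X i ^ 2))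
    (p : MvPolynomial (Fin n) ℝ)
    (hp : ∀ x : Fin n → ℝ, (∀ i, eval x (h i) = 0) → (∀ j, 0 ≤ eval x (g j)) →
      0 < eval x p) :
    inCone h g p := by
  classical
  by_contra hpM
  obtain ⟨N, hN, hNmem⟩ := harch
  set M : Set (MvPolynomial (Fin n) ℝ) := {f | inCone h g f} with hMdef
  have hM : IsQM M := by
    constructor
    · rintro a b ⟨a1, ha1, b1, ⟨σ₀, hσ₀, σ, hσ, rfl⟩, rfl⟩ ⟨a2, ha2, b2, ⟨τ₀, hτ₀, τ, hτ, rfl⟩, rfl⟩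
      refine ⟨a1 + a2, Ideal.add_mem _ ha1 ha2, _,
        ⟨σ₀ + τ₀, hσ₀.add hτ₀, fun j => σ j + τ j, fun j => (hσ j).add (hτ j), rfl⟩, ?_⟩
      simp only [add_mul, Finset.sum_add_distrib]
      ring
    · rintro s a ⟨a1, ha1, b1, ⟨σ₀, hσ₀, σ, hσ, rfl⟩, rfl⟩
      refine ⟨s ^ 2 * a1, Ideal.mul_mem_left _ _ ha1, _,
        ⟨s ^ 2 * σ₀, sumSq_sq_mul hσ₀, fun j => s ^ 2 * σ j,
          fun j => sumSq_sq_mul (hσ j), rfl⟩, ?_⟩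
      simp only [Finset.mul_sum, mul_add, mul_assoc]
    · exact ⟨0, Ideal.zero_mem _, 1,
        ⟨1, isSumSq_one, fun _ => 0, fun _ => IsSumSq.zero, by simp⟩, by simp⟩
  have hhM : ∀ i, h i ∈ M := by
    intro i
    exact ⟨h i, Ideal.subset_span ⟨i, rfl⟩, 0,
      ⟨0, IsSumSq.zero, fun _ => 0, fun _ => IsSumSq.zero, by simp⟩, by simp⟩
  have hhM' : ∀ i, -h i ∈ M := by
    intro i
    exact ⟨-h i, Submodule.neg_mem _ (Ideal.subset_span ⟨i, rfl⟩), 0,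
      ⟨0, IsSumSq.zero, fun _ => 0, fun _ => IsSumSq.zero, by simp⟩, by simp⟩
  have hgM : ∀ j, g j ∈ M := by
    intro j
    refine ⟨0, Ideal.zero_mem _, g j,
      ⟨0, IsSumSq.zero, fun j' => if j' = j then 1 else 0, fun j' => ?_, ?_⟩, by simp⟩
    · by_cases hj : j' = j <;> simp [hj, isSumSq_one, IsSumSq.zero]
    · simp [ite_mul, Finset.sum_ite_eq']
  obtain ⟨x, hx1, hx2⟩ := exists_point hM hN.le (show _ ∈ M from hNmem) (p := p) hpM
  have hh0 : ∀ i, eval x (h i) = 0 := by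
    intro i
    have h1 := hx1 _ (hhM i)
    have h2 := hx1 _ (hhM' i)
    rw [map_neg] at h2
    linarith
  have hg0 : ∀ j, 0 ≤ eval x (g j) := fun j => hx1 _ (hgM j)
  linarith [hp x hh0 hg0]
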